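/- If Y is a compact space and D is a regular Gδ subset of X × Y, then the projection π(D) onto X is a regular Gδ subset of X. -/

import Mathlib

def IsRegGDelta {X : Type*} [TopologicalSpace X] (D : Set X) : Prop :=
  ∃ U : ℕ → Set X, (∀ n, IsOpen (U n)) ∧ (∀ n, D ⊆ U n) ∧ D = ⋂ n, closure (U n)

theorem stmt_7 {X Y : Type*} [TopologicalSpace X] [TopologicalSpace Y]
    [CompactSpace Y] (D : Set (X × Y)) (hD : IsRegGDelta D) :
    IsRegGDelta (Prod.fst '' D) := by
  obtain ⟨U, hUopen, hDU, hDeq⟩ := hD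
  set W : ℕ → Set (X × Y) := fun n => ⋂ k ∈ Finset.range (n + 1), U k with hW
  have hWopen : ∀ n, IsOpen (W n) := fun n =>
    isOpen_biInter_finset fun k _ => hUopen k
  have hDW : ∀ n, D ⊆ W n := fun n =>
    Set.subset_iInter₂ fun k _ => hDU k
  have hWanti : ∀ n, W (n + 1) ⊆ W n := by
    intro n z hz
    simp only [hW, Set.mem_iInter, Finset.mem_range] at hz ⊢
    exact fun k hk => hz k (Nat.lt_succ_of_lt hk)
  have hWU : ∀ n, W n ⊆ U n := fun n =>
    Set.iInter₂_subset n (Finset.self_mem_range_succ n)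
  refine ⟨fun n => Prod.fst '' W n, fun n => isOpenMap_fst _ (hWopen n),
    fun n => Set.image_mono (hDW n), ?_⟩
  apply Set.Subset.antisymm
  · intro x hx
    simp only [Set.mem_iInter]
    exact fun n => subset_closure (Set.image_mono (hDW n) hx)
  · intro x hx
    simp only [Set.mem_iInter] at hx
    have hx' : ∀ n, x ∈ Prod.fst '' closure (W n) := by
      intro n
      have h1 : closure (Prod.fst '' W n) ⊆ Prod.fst '' closure (W n) :=
        closure_minimal (Set.image_mono subset_closure)
          (isClosedMap_fst_of_compactSpace _ isClosed_closure)
      exact h1 (hx n)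
    set C : ℕ → Set Y := fun n => {y | (x, y) ∈ closure (W n)} with hC
    have hCc : ∀ n, IsClosed (C n) := fun n =>
      isClosed_closure.preimage (Continuous.prodMk_right x)
    have hCne : ∀ n, (C n).Nonempty := by
      intro n
      obtain ⟨⟨a, b⟩, hz, rfl⟩ := hx' n
      exact ⟨b, hz⟩
    have hCanti : ∀ n, C (n + 1) ⊆ C n := fun n y hy =>
      closure_mono (hWanti n) hy
    obtain ⟨y, hy⟩ := IsCompact.nonempty_iInter_of_sequence_nonempty_isCompact_isClosed
      C hCanti hCne ((hCc 0).isCompact) hCc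
    simp only [Set.mem_iInter] at hy
    refine ⟨(x, y), ?_, rfl⟩
    rw [hDeq]
    exact Set.mem_iInter.2 fun n => closure_mono (hWU n) (hy n)
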